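/- (Size of the conditional independence error.) Let Λ_1,…,Λ_𝒩 be disjoint disks of radius T in ℝ² with centers ω_i, satisfying min_{i≠j} dist(Λ_i,Λ_j) ≥ 10T. Let f_i be signed measures with f_i = X_i − Leb|_{Λ_i}, where X_i is a finite point measure on Λ_i with at most 10T² atoms, and set D_i := f_i(Λ_i). Then | (1/2)∑_{i≠j} ∬_{Λ_i×Λ_j} (−log|x−y|) df_i(x) df_j(y) − (1/2)∑_{i≠j} (−D_i D_j log|ω_i−ω_j|) | ≤ C·T⁵·∑_{i≠j} 1/dist(Λ_i,Λ_j), for a universal constant C. -/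

import Mathlib

open MeasureTheory Metric

local notation "E2" => EuclideanSpace ℝ (Fin 2)

lemma vol2 (p : E2) {T : ℝ} (hT : 0 ≤ T) :
    (volume (closedBall p T)).toReal = Real.pi * T ^ 2 := by
  rw [EuclideanSpace.volume_closedBall, Fintype.card_fin]
  have h2 : ((2:ℕ) : ℝ) / 2 + 1 = 2 := by norm_num
  rw [h2, Real.Gamma_two, Real.sq_sqrt Real.pi_nonneg, div_one]
  rw [← ENNReal.ofReal_pow hT, ← ENNReal.ofReal_mul (by positivity),
    ENNReal.toReal_ofReal (by positivity)]
  ring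

lemma log_est {T r dxy : ℝ} (hT : 0 < T) (hsep : 10 * T ≤ r - 2 * T)
    (h1 : r - 2 * T ≤ dxy) (h2 : dxy ≤ r + 2 * T) :
    |Real.log r - Real.log dxy| ≤ 2 * T / (r - 2 * T) := by
  have hd : 0 < r - 2 * T := by linarith
  have hr : 0 < r := by linarith
  have hdxy : 0 < dxy := by linarith
  rw [abs_le]
  constructor
  · -- log dxy - log r ≤ 2T/d : log dxy ≤ log (r+2T), log(r+2T) - log r ≤ 2T/r ≤ 2T/d
    have m1 : Real.log dxy ≤ Real.log (r + 2 * T) := Real.log_le_log hdxy h2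
    have m2 : Real.log (r + 2 * T) - Real.log r = Real.log ((r + 2 * T) / r) := by
      rw [Real.log_div (by linarith) (ne_of_gt hr)]
    have m3 : Real.log ((r + 2 * T) / r) ≤ (r + 2 * T) / r - 1 :=
      Real.log_le_sub_one_of_pos (by positivity)
    have m4 : (r + 2 * T) / r - 1 = 2 * T / r := by field_simp; ring
    have m5 : 2 * T / r ≤ 2 * T / (r - 2 * T) := by
      apply div_le_div_of_nonneg_left (by linarith) hd (by linarith)
    linarith
  · have m1 : Real.log (r - 2 * T) ≤ Real.log dxy := Real.log_le_log hd h1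
    have m2 : Real.log r - Real.log (r - 2 * T) = Real.log (r / (r - 2 * T)) := by
      rw [Real.log_div (ne_of_gt hr) (ne_of_gt hd)]
    have m3 : Real.log (r / (r - 2 * T)) ≤ r / (r - 2 * T) - 1 :=
      Real.log_le_sub_one_of_pos (by positivity)
    have m4 : r / (r - 2 * T) - 1 = 2 * T / (r - 2 * T) := by field_simp; ring
    linarith

set_option maxHeartbeats 2000000 in
lemma pair_bound {T : ℝ} (hT : 0 < T) (ωi ωj : E2) (Xi Xj : Finset E2)
    (hsep : 10 * T ≤ dist ωi ωj - 2 * T)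
    (hXi : ∀ p ∈ Xi, dist p ωi ≤ T) (hXj : ∀ p ∈ Xj, dist p ωj ≤ T)
    (hNi : (Xi.card : ℝ) ≤ 10 * T ^ 2) (hNj : (Xj.card : ℝ) ≤ 10 * T ^ 2) :
    |((∑ x ∈ Xi, ∑ y ∈ Xj, -Real.log (dist x y))
        - (∑ x ∈ Xi, ∫ y in closedBall ωj T, -Real.log (dist x y))
        - (∫ x in closedBall ωi T, ∑ y ∈ Xj, -Real.log (dist x y))
        + (∫ x in closedBall ωi T,
            ∫ y in closedBall ωj T, -Real.log (dist x y)))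
      + (((Xi.card : ℝ) - Real.pi * T ^ 2) * ((Xj.card : ℝ) - Real.pi * T ^ 2)
          * Real.log (dist ωi ωj))|
    ≤ 400 * T ^ 5 * (1 / (dist ωi ωj - 2 * T)) := by
  set r : ℝ := dist ωi ωj with hr
  set d : ℝ := r - 2 * T with hd
  have hdpos : 0 < d := by simp only [hd]; linarith
  set L : ℝ := Real.log r with hL
  set b : ℝ := 2 * T / d with hb
  have hbpos : 0 ≤ b := by positivity
  set A : ℝ := Real.pi * T ^ 2 with hA
  set Bi : Set E2 := closedBall ωi T with hBi
  set Bj : Set E2 := closedBall ωj T with hBj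
  have hApos : 0 ≤ A := by positivity
  have hvoli : (volume Bi).toReal = A := vol2 ωi hT.le
  have hvolj : (volume Bj).toReal = A := vol2 ωj hT.le
  -- distance bounds
  have hdistlb : ∀ x y : E2, dist x ωi ≤ T → dist y ωj ≤ T → d ≤ dist x y := by
    intro x y hx hy
    have := dist_triangle4 ωi x y ωj
    rw [dist_comm ωi x] at this
    simp only [hd, hr]
    linarith [this, dist_comm y ωj ▸ hy]
  have hg : ∀ x y : E2, dist x ωi ≤ T → dist y ωj ≤ T →
      |L - Real.log (dist x y)| ≤ b := by
    intro x y hx hy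
    apply log_est hT hsep (hdistlb x y hx hy)
    have := dist_triangle4 x ωi ωj y
    rw [dist_comm ωj y] at this
    linarith
  -- continuity / integrability of g in y, for x near ωi
  have hcont : ∀ x : E2, dist x ωi ≤ T →
      ContinuousOn (fun y => L - Real.log (dist x y)) Bj := by
    intro x hx
    apply continuousOn_const.sub
    exact ContinuousOn.log (continuous_const.dist continuous_id).continuousOn
      (fun y hy => ne_of_gt (lt_of_lt_of_le hdpos
        (hdistlb x y hx (mem_closedBall.mp hy))))
  have hint : ∀ x : E2, dist x ωi ≤ T →
      IntegrableOn (fun y => L - Real.log (dist x y)) Bj := by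
    intro x hx
    exact (hcont x hx).integrableOn_compact (isCompact_closedBall ωj T)
  have hconst : IntegrableOn (fun _ : E2 => L) Bj :=
    (integrableOn_const_iff).mpr (Or.inr measure_closedBall_lt_top)
  -- inner rewrite
  have e2x : ∀ x : E2, dist x ωi ≤ T →
      ∫ y in Bj, -Real.log (dist x y) =
        (∫ y in Bj, (L - Real.log (dist x y))) - A * L := by
    intro x hx
    have hfun : (fun y : E2 => -Real.log (dist x y)) =
        fun y => (L - Real.log (dist x y)) - L := by funext y; ring
    rw [hfun, integral_sub (hint x hx) hconst, setIntegral_const, smul_eq_mul, measureReal_def, hvolj]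
  -- bound for inner integrals of g
  have hS2x : ∀ x : E2, dist x ωi ≤ T →
      |∫ y in Bj, (L - Real.log (dist x y))| ≤ A * b := by
    intro x hx
    have := norm_setIntegral_le_of_norm_le_const (μ := volume) (s := Bj)
      measure_closedBall_lt_top
      (C := b) (f := fun y => L - Real.log (dist x y))
      (fun y hy => by simpa using hg x y hx (mem_closedBall.mp hy))
    rw [Real.norm_eq_abs] at this
    calc |∫ y in Bj, (L - Real.log (dist x y))| ≤ b * (volume Bj).toReal := this
    _ = A * b := by rw [hvolj]; ring
  -- product integrability
  haveI hfinI : IsFiniteMeasure (volume.restrict Bi) :=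
    ⟨by rw [Measure.restrict_apply_univ]; exact measure_closedBall_lt_top⟩
  haveI hfinJ : IsFiniteMeasure (volume.restrict Bj) :=
    ⟨by rw [Measure.restrict_apply_univ]; exact measure_closedBall_lt_top⟩
  have hGmeas : ContinuousOn (fun p : E2 × E2 => L - Real.log (dist p.1 p.2)) (Bi ×ˢ Bj) := by
    apply continuousOn_const.sub
    exact ContinuousOn.log continuous_dist.continuousOn
      (fun p hp => ne_of_gt (lt_of_lt_of_le hdpos
        (hdistlb p.1 p.2 (mem_closedBall.mp hp.1) (mem_closedBall.mp hp.2))))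
  have hprodeq : (volume.restrict Bi).prod (volume.restrict Bj) =
      (volume.prod volume).restrict (Bi ×ˢ Bj) := Measure.prod_restrict Bi Bj
  have hGint : Integrable (fun p : E2 × E2 => L - Real.log (dist p.1 p.2))
      ((volume.restrict Bi).prod (volume.restrict Bj)) := by
    apply Integrable.mono' (integrable_const b)
    · rw [hprodeq]
      exact hGmeas.aestronglyMeasurable
        (measurableSet_closedBall.prod measurableSet_closedBall)
    · rw [hprodeq]
      filter_upwards [ae_restrict_mem
        (measurableSet_closedBall.prod measurableSet_closedBall)] with p hp
      simpa using hg p.1 p.2 (mem_closedBall.mp hp.1) (mem_closedBall.mp hp.2)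
  have hInner : IntegrableOn (fun x => ∫ y in Bj, (L - Real.log (dist x y))) Bi :=
    hGint.integral_prod_left
  -- the four term rewrites
  have e1 : (∑ x ∈ Xi, ∑ y ∈ Xj, -Real.log (dist x y)) =
      (∑ x ∈ Xi, ∑ y ∈ Xj, (L - Real.log (dist x y)))
        - (Xi.card : ℝ) * (Xj.card : ℝ) * L := by
    simp only [Finset.sum_sub_distrib, Finset.sum_const, nsmul_eq_mul, Finset.sum_neg_distrib]
    ring
  have e2 : (∑ x ∈ Xi, ∫ y in Bj, -Real.log (dist x y)) =
      (∑ x ∈ Xi, ∫ y in Bj, (L - Real.log (dist x y))) - (Xi.card : ℝ) * A * L := by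
    rw [Finset.sum_congr rfl (fun x hx => e2x x (hXi x hx)), Finset.sum_sub_distrib,
      Finset.sum_const, nsmul_eq_mul]
    ring
  have e3 : (∫ x in Bi, ∑ y ∈ Xj, -Real.log (dist x y)) =
      (∫ x in Bi, ∑ y ∈ Xj, (L - Real.log (dist x y))) - A * (Xj.card : ℝ) * L := by
    have hfun : (fun x : E2 => ∑ y ∈ Xj, -Real.log (dist x y)) =
        fun x => (∑ y ∈ Xj, (L - Real.log (dist x y))) - (Xj.card : ℝ) * L := by
      funext x
      simp only [Finset.sum_sub_distrib, Finset.sum_const, nsmul_eq_mul, Finset.sum_neg_distrib]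
      ring
    have hintS : IntegrableOn (fun x : E2 => ∑ y ∈ Xj, (L - Real.log (dist x y))) Bi := by
      apply ContinuousOn.integrableOn_compact (isCompact_closedBall ωi T)
      apply continuousOn_finset_sum
      intro y hy
      apply continuousOn_const.sub
      apply ContinuousOn.log (continuous_id.dist continuous_const).continuousOn
      intro x hx
      have : d ≤ dist x y := hdistlb x y (mem_closedBall.mp hx) (hXj y hy)
      exact ne_of_gt (lt_of_lt_of_le hdpos this)
    rw [hfun, integral_sub hintS ((integrableOn_const_iff).mpr (Or.inr measure_closedBall_lt_top)),
      setIntegral_const, smul_eq_mul, measureReal_def, hvoli]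
    ring
  have e4 : (∫ x in Bi, ∫ y in Bj, -Real.log (dist x y)) =
      (∫ x in Bi, ∫ y in Bj, (L - Real.log (dist x y))) - A * A * L := by
    have hcongr : ∫ x in Bi, ∫ y in Bj, -Real.log (dist x y) =
        ∫ x in Bi, ((∫ y in Bj, (L - Real.log (dist x y))) - A * L) := by
      apply setIntegral_congr_fun measurableSet_closedBall
      intro x hx
      exact e2x x (mem_closedBall.mp hx)
    rw [hcongr, integral_sub hInner ((integrableOn_const_iff).mpr (Or.inr measure_closedBall_lt_top)),
      setIntegral_const, smul_eq_mul, measureReal_def, hvoli]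
    ring
  -- bounds
  have hS1 : |∑ x ∈ Xi, ∑ y ∈ Xj, (L - Real.log (dist x y))|
      ≤ (Xi.card : ℝ) * ((Xj.card : ℝ) * b) := by
    calc |∑ x ∈ Xi, ∑ y ∈ Xj, (L - Real.log (dist x y))|
        ≤ ∑ x ∈ Xi, |∑ y ∈ Xj, (L - Real.log (dist x y))| := Finset.abs_sum_le_sum_abs _ _
      _ ≤ ∑ x ∈ Xi, ((Xj.card : ℝ) * b) := by
          apply Finset.sum_le_sum
          intro x hx
          calc |∑ y ∈ Xj, (L - Real.log (dist x y))|
              ≤ ∑ y ∈ Xj, |L - Real.log (dist x y)| := Finset.abs_sum_le_sum_abs _ _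
            _ ≤ ∑ y ∈ Xj, b := Finset.sum_le_sum (fun y hy => hg x y (hXi x hx) (hXj y hy))
            _ = (Xj.card : ℝ) * b := by rw [Finset.sum_const, nsmul_eq_mul]
      _ = (Xi.card : ℝ) * ((Xj.card : ℝ) * b) := by rw [Finset.sum_const, nsmul_eq_mul]
  have hS2 : |∑ x ∈ Xi, ∫ y in Bj, (L - Real.log (dist x y))| ≤ (Xi.card : ℝ) * (A * b) := by
    calc |∑ x ∈ Xi, ∫ y in Bj, (L - Real.log (dist x y))|
        ≤ ∑ x ∈ Xi, |∫ y in Bj, (L - Real.log (dist x y))| := Finset.abs_sum_le_sum_abs _ _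
      _ ≤ ∑ x ∈ Xi, (A * b) := Finset.sum_le_sum (fun x hx => hS2x x (hXi x hx))
      _ = (Xi.card : ℝ) * (A * b) := by rw [Finset.sum_const, nsmul_eq_mul]
  have hS3 : |∫ x in Bi, ∑ y ∈ Xj, (L - Real.log (dist x y))| ≤ ((Xj.card : ℝ) * b) * A := by
    have := norm_setIntegral_le_of_norm_le_const (μ := volume) (s := Bi)
      measure_closedBall_lt_top
      (C := (Xj.card : ℝ) * b) (f := fun x => ∑ y ∈ Xj, (L - Real.log (dist x y)))
      (fun x hx => by
        rw [Real.norm_eq_abs]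
        calc |∑ y ∈ Xj, (L - Real.log (dist x y))|
            ≤ ∑ y ∈ Xj, |L - Real.log (dist x y)| := Finset.abs_sum_le_sum_abs _ _
          _ ≤ ∑ y ∈ Xj, b := Finset.sum_le_sum
              (fun y hy => hg x y (mem_closedBall.mp hx) (hXj y hy))
          _ = (Xj.card : ℝ) * b := by rw [Finset.sum_const, nsmul_eq_mul])
    rw [Real.norm_eq_abs, measureReal_def, hvoli] at this
    exact this
  have hS4 : |∫ x in Bi, ∫ y in Bj, (L - Real.log (dist x y))| ≤ (A * b) * A := by
    have := norm_setIntegral_le_of_norm_le_const (μ := volume) (s := Bi)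
      measure_closedBall_lt_top
      (C := A * b) (f := fun x => ∫ y in Bj, (L - Real.log (dist x y)))
      (fun x hx => by rw [Real.norm_eq_abs]; exact hS2x x (mem_closedBall.mp hx))
    rw [Real.norm_eq_abs, measureReal_def, hvoli] at this
    exact this
  -- assemble
  have key : ((∑ x ∈ Xi, ∑ y ∈ Xj, -Real.log (dist x y))
        - (∑ x ∈ Xi, ∫ y in Bj, -Real.log (dist x y))
        - (∫ x in Bi, ∑ y ∈ Xj, -Real.log (dist x y))
        + (∫ x in Bi, ∫ y in Bj, -Real.log (dist x y)))
      + (((Xi.card : ℝ) - A) * ((Xj.card : ℝ) - A) * L)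
      = (∑ x ∈ Xi, ∑ y ∈ Xj, (L - Real.log (dist x y)))
        - (∑ x ∈ Xi, ∫ y in Bj, (L - Real.log (dist x y)))
        - (∫ x in Bi, ∑ y ∈ Xj, (L - Real.log (dist x y)))
        + (∫ x in Bi, ∫ y in Bj, (L - Real.log (dist x y))) := by
    rw [e1, e2, e3, e4]; ring
  rw [key]
  have hpi : Real.pi ≤ 4 := by linarith [Real.pi_le_four]
  have hA4 : A ≤ 4 * T ^ 2 := by
    rw [hA]
    nlinarith [sq_nonneg T]
  have hNi0 : (0:ℝ) ≤ (Xi.card : ℝ) := Nat.cast_nonneg _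
  have hNj0 : (0:ℝ) ≤ (Xj.card : ℝ) := Nat.cast_nonneg _
  have total : |(∑ x ∈ Xi, ∑ y ∈ Xj, (L - Real.log (dist x y)))
        - (∑ x ∈ Xi, ∫ y in Bj, (L - Real.log (dist x y)))
        - (∫ x in Bi, ∑ y ∈ Xj, (L - Real.log (dist x y)))
        + (∫ x in Bi, ∫ y in Bj, (L - Real.log (dist x y)))|
      ≤ (Xi.card : ℝ) * ((Xj.card : ℝ) * b) + (Xi.card : ℝ) * (A * b)
        + ((Xj.card : ℝ) * b) * A + (A * b) * A := by
    calc _ ≤ |(∑ x ∈ Xi, ∑ y ∈ Xj, (L - Real.log (dist x y)))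
          - (∑ x ∈ Xi, ∫ y in Bj, (L - Real.log (dist x y)))
          - (∫ x in Bi, ∑ y ∈ Xj, (L - Real.log (dist x y)))|
          + |∫ x in Bi, ∫ y in Bj, (L - Real.log (dist x y))| := abs_add_le _ _
      _ ≤ (|(∑ x ∈ Xi, ∑ y ∈ Xj, (L - Real.log (dist x y)))
          - (∑ x ∈ Xi, ∫ y in Bj, (L - Real.log (dist x y)))|
          + |∫ x in Bi, ∑ y ∈ Xj, (L - Real.log (dist x y))|)
          + |∫ x in Bi, ∫ y in Bj, (L - Real.log (dist x y))| := by
            gcongr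
            exact abs_sub _ _
      _ ≤ _ := by
            have h12 := abs_sub (∑ x ∈ Xi, ∑ y ∈ Xj, (L - Real.log (dist x y)))
              (∑ x ∈ Xi, ∫ y in Bj, (L - Real.log (dist x y)))
            linarith [hS1, hS2, hS3, hS4]
  calc _ ≤ (Xi.card : ℝ) * ((Xj.card : ℝ) * b) + (Xi.card : ℝ) * (A * b)
        + ((Xj.card : ℝ) * b) * A + (A * b) * A := total
    _ ≤ 14 * T ^ 2 * (14 * T ^ 2 * b) := by
        have p1 : (Xi.card : ℝ) * (Xj.card : ℝ) * b ≤ (10 * T ^ 2) * (10 * T ^ 2) * b :=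
          mul_le_mul_of_nonneg_right (mul_le_mul hNi hNj hNj0 (by positivity)) hbpos
        have p2 : (Xi.card : ℝ) * A * b ≤ (10 * T ^ 2) * (4 * T ^ 2) * b :=
          mul_le_mul_of_nonneg_right (mul_le_mul hNi hA4 hApos (by positivity)) hbpos
        have p3 : (Xj.card : ℝ) * A * b ≤ (10 * T ^ 2) * (4 * T ^ 2) * b :=
          mul_le_mul_of_nonneg_right (mul_le_mul hNj hA4 hApos (by positivity)) hbpos
        have p4 : A * A * b ≤ (4 * T ^ 2) * (4 * T ^ 2) * b :=
          mul_le_mul_of_nonneg_right (mul_le_mul hA4 hA4 hApos (by positivity)) hbpos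
        nlinarith [p1, p2, p3, p4]
    _ ≤ 400 * T ^ 5 * (1 / d) := by
        have h1 : 14 * T ^ 2 * (14 * T ^ 2 * b) = 392 * T ^ 5 / d := by rw [hb]; ring
        have h2 : (400:ℝ) * T ^ 5 * (1 / d) = 400 * T ^ 5 / d := by ring
        rw [h1, h2, div_le_div_iff_of_pos_right hdpos]
        nlinarith [pow_pos hT 5]

/-- size of the conditional independence error: for disjoint
well-separated disks `Λ_i = D(ω_i, T)` carrying at most `10T²` points each,
the true pairwise logarithmic interaction of the fluctuation measures
`f_i = X_i - Leb|_{Λ_i}` differs from the approximation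
`-D_i D_j log|ω_i - ω_j|` by at most `C T⁵ ∑_{i≠j} 1/dist(Λ_i,Λ_j)`. -/
theorem stmt9 :
    ∃ C : ℝ, 0 < C ∧
    ∀ (T : ℝ), 0 < T →
    ∀ (𝒩 : ℕ) (ω : Fin 𝒩 → EuclideanSpace ℝ (Fin 2))
      (X : Fin 𝒩 → Finset (EuclideanSpace ℝ (Fin 2)))
      (D : Fin 𝒩 → ℝ) (I : Fin 𝒩 → Fin 𝒩 → ℝ),
      (∀ i j : Fin 𝒩, i ≠ j → 10 * T ≤ dist (ω i) (ω j) - 2 * T) →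
      (∀ i, ∀ p ∈ X i, dist p (ω i) ≤ T) →
      (∀ i, ((X i).card : ℝ) ≤ 10 * T ^ 2) →
      (∀ i, D i = ((X i).card : ℝ) - Real.pi * T ^ 2) →
      (∀ i j, I i j =
        (∑ x ∈ X i, ∑ y ∈ X j, -Real.log (dist x y))
        - (∑ x ∈ X i, ∫ y in closedBall (ω j) T, -Real.log (dist x y))
        - (∫ x in closedBall (ω i) T, ∑ y ∈ X j, -Real.log (dist x y))
        + (∫ x in closedBall (ω i) T,
            ∫ y in closedBall (ω j) T, -Real.log (dist x y))) →
      |(1/2) * (∑ i : Fin 𝒩, ∑ j ∈ Finset.univ.erase i, I i j)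
        - (1/2) * (∑ i : Fin 𝒩, ∑ j ∈ Finset.univ.erase i,
            -(D i * D j * Real.log (dist (ω i) (ω j))))|
      ≤ C * T ^ 5 * (∑ i : Fin 𝒩, ∑ j ∈ Finset.univ.erase i,
            1 / (dist (ω i) (ω j) - 2 * T)) := by
  refine ⟨400, by norm_num, ?_⟩
  intro T hT 𝒩 ω X D I hsep hX hcard hD hI
  have hterm : ∀ i : Fin 𝒩, ∀ j ∈ Finset.univ.erase i,
      |I i j - (-(D i * D j * Real.log (dist (ω i) (ω j))))|
        ≤ 400 * T ^ 5 * (1 / (dist (ω i) (ω j) - 2 * T)) := by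
    intro i j hj
    have hij : i ≠ j := Ne.symm (Finset.mem_erase.mp hj).1
    rw [hI i j, hD i, hD j]
    have h := pair_bound hT (ω i) (ω j) (X i) (X j) (hsep i j hij)
      (hX i) (hX j) (hcard i) (hcard j)
    rw [sub_neg_eq_add]
    exact h
  have hsum : |∑ i : Fin 𝒩, ∑ j ∈ Finset.univ.erase i,
      (I i j - (-(D i * D j * Real.log (dist (ω i) (ω j)))))|
      ≤ 400 * T ^ 5 * (∑ i : Fin 𝒩, ∑ j ∈ Finset.univ.erase i,
          1 / (dist (ω i) (ω j) - 2 * T)) := by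
    calc _ ≤ ∑ i : Fin 𝒩, |∑ j ∈ Finset.univ.erase i,
          (I i j - (-(D i * D j * Real.log (dist (ω i) (ω j)))))| :=
            Finset.abs_sum_le_sum_abs _ _
      _ ≤ ∑ i : Fin 𝒩, ∑ j ∈ Finset.univ.erase i,
          (400 * T ^ 5 * (1 / (dist (ω i) (ω j) - 2 * T))) := by
            apply Finset.sum_le_sum
            intro i _
            exact (Finset.abs_sum_le_sum_abs _ _).trans
              (Finset.sum_le_sum (hterm i))
      _ = 400 * T ^ 5 * (∑ i : Fin 𝒩, ∑ j ∈ Finset.univ.erase i,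
          1 / (dist (ω i) (ω j) - 2 * T)) := by
            rw [Finset.mul_sum]
            exact Finset.sum_congr rfl (fun i _ => by rw [Finset.mul_sum])
  have hS0 : 0 ≤ ∑ i : Fin 𝒩, ∑ j ∈ Finset.univ.erase i,
      1 / (dist (ω i) (ω j) - 2 * T) := by
    apply Finset.sum_nonneg
    intro i _
    apply Finset.sum_nonneg
    intro j hj
    have hij : i ≠ j := Ne.symm (Finset.mem_erase.mp hj).1
    have h := hsep i j hij
    have : 0 < dist (ω i) (ω j) - 2 * T := by linarith
    positivity
  have hrw : (1/2 : ℝ) * (∑ i : Fin 𝒩, ∑ j ∈ Finset.univ.erase i, I i j)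
        - (1/2) * (∑ i : Fin 𝒩, ∑ j ∈ Finset.univ.erase i,
            -(D i * D j * Real.log (dist (ω i) (ω j))))
      = (1/2) * ∑ i : Fin 𝒩, ∑ j ∈ Finset.univ.erase i,
          (I i j - (-(D i * D j * Real.log (dist (ω i) (ω j))))) := by
    rw [← mul_sub, ← Finset.sum_sub_distrib]
    congr 1
    exact Finset.sum_congr rfl (fun i _ => (Finset.sum_sub_distrib _ _).symm)
  rw [hrw, abs_mul, abs_of_pos (by norm_num : (0:ℝ) < 1/2)]
  have h400 : 0 ≤ 400 * T ^ 5 * (∑ i : Fin 𝒩, ∑ j ∈ Finset.univ.erase i,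
      1 / (dist (ω i) (ω j) - 2 * T)) := mul_nonneg (by positivity) hS0
  nlinarith [hsum, abs_nonneg (∑ i : Fin 𝒩, ∑ j ∈ Finset.univ.erase i,
      (I i j - (-(D i * D j * Real.log (dist (ω i) (ω j))))))]
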